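/- arXiv:math/0407031 — 2 statements merged into one kernel-verified Lean document; each statement's English description precedes it below -/
import Mathlib

section
/- Let 𝐁 be an additive track category, 𝐛 a full track subcategory, and 𝐚 = 𝐛_≃ the corresponding full additive subcategory of 𝐀 = 𝐁_≃. Suppose either (a) 𝐁 is 𝕃-additive and 𝐚 is closed under 𝕃 (X ∈ 𝐚 implies 𝕃X ∈ 𝐚), or (b) 𝐁 is ℝ-additive and ℝ preserves 𝐚-exactness of chain complexes in 𝐀. Then for any secondary chain complex (A,d,δ) in 𝐁, 𝐚-exactness of its image (A,[d]) in 𝐀 implies 𝐛-exactness of (A,d,δ). -/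
/-!
Track categories.  A track category is a category enriched in groupoids, i.e. a strict
2-category (`Bicategory` + `Bicategory.Strict`) all of whose 2-cells ("tracks") are
invertible.  Invertibility of all 2-cells is imposed by the hypothesis `hinv` below.
A strict zero object is an object whose hom-groupoids from and to any object are
trivial (exactly one map, exactly one track).
-/

open CategoryTheory CategoryTheory.Bicategory

universe w v u

/-- A strict zero object `∗` in a (strict) track category: for every `X` the
hom-groupoids `⟦X,∗⟧` and `⟦∗,X⟧` have exactly one object and one morphism. -/
class StrictZero (B : Type u) [Bicategory.{w, v} B] where
  zobj : B
  uniqueTo : ∀ X : B, Unique (X ⟶ zobj)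
  uniqueFrom : ∀ X : B, Unique (zobj ⟶ X)
  uniqueTrackTo : ∀ (X : B) (f g : X ⟶ zobj), Unique (f ⟶ g)
  uniqueTrackFrom : ∀ (X : B) (f g : zobj ⟶ X), Unique (f ⟶ g)

section

variable {B : Type u} [Bicategory.{w, v} B] [Bicategory.Strict B] [StrictZero B]

/-- The zero map `0_{X,Y} : X → ∗ → Y`. -/
def zmap (X Y : B) : X ⟶ Y :=
  (StrictZero.uniqueTo X).default ≫ (StrictZero.uniqueFrom Y).default

lemma zmap_comp (X : B) {Y Z : B} (f : Y ⟶ Z) : zmap X Y ≫ f = zmap X Z := by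
  unfold zmap
  rw [Bicategory.Strict.assoc]
  congr 1
  haveI := StrictZero.uniqueFrom (B := B) Z
  exact Subsingleton.elim _ _

lemma comp_zmap {X Y : B} (f : X ⟶ Y) (Z : B) : f ≫ zmap Y Z = zmap X Z := by
  unfold zmap
  rw [← Bicategory.Strict.assoc]
  congr 1
  haveI := StrictZero.uniqueTo (B := B) X
  exact Subsingleton.elim _ _

end

/-- A secondary chain complex `(A, d, δ)` in a track category `B`: objects `A_n`, maps
`d_n : A_{n+1} ⟶ A_n` and tracks `δ_n : d_n d_{n+1} ⇒ 0` such that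
`d_{n-1} δ_n = δ_{n-1} d_{n+1}` (as tracks `d_{n-1} d_n d_{n+1} ⇒ 0`). -/
structure SecChainComplex (B : Type u) [Bicategory.{w, v} B] [Bicategory.Strict B]
    [StrictZero B] where
  X : ℤ → B
  d : ∀ n : ℤ, X (n + 1) ⟶ X n
  δ : ∀ n : ℤ, (d (n + 1) ≫ d n) ⟶ zmap (X (n + 1 + 1)) (X n)
  compat : ∀ n : ℤ,
    (δ (n + 1) ▷ d n) ≫ eqToHom (zmap_comp (X (n + 1 + 1 + 1)) (d n)) =
      eqToHom (Bicategory.Strict.assoc (d (n + 1 + 1)) (d (n + 1)) (d n)) ≫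
        (d (n + 1 + 1) ◁ δ n) ≫ eqToHom (comp_zmap (d (n + 1 + 1)) (X n))

namespace SecChainComplex

variable {B : Type u} [Bicategory.{w, v} B] [Bicategory.Strict B] [StrictZero B]

/-- A `𝐛`-cycle of degree `n+2` in a secondary chain complex: a map `c : T ⟶ A_{n+2}`
together with a track `γ : d_{n+1} c ⇒ 0` such that `d_n γ = δ_n c`. -/
def IsSecCycle (A : SecChainComplex B) {T : B} (n : ℤ) (c : T ⟶ A.X (n + 1 + 1))
    (γ : c ≫ A.d (n + 1) ⟶ zmap T (A.X (n + 1))) : Prop :=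
  (γ ▷ A.d n) ≫ eqToHom (zmap_comp T (A.d n)) =
    eqToHom (Bicategory.Strict.assoc c (A.d (n + 1)) (A.d n)) ≫
      (c ◁ A.δ n) ≫ eqToHom (comp_zmap c (A.X n))

/-- A `𝐛`-cycle `(c,γ)` is a `𝐛`-boundary if there are `a : T ⟶ A_{n+3}` and a track
`α : c ⇒ d_{n+2} a` with `γ = δ_{n+1} a □ d_{n+1} α`. -/
def IsSecBoundary (A : SecChainComplex B) {T : B} (n : ℤ) (c : T ⟶ A.X (n + 1 + 1))
    (γ : c ≫ A.d (n + 1) ⟶ zmap T (A.X (n + 1))) : Prop :=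
  ∃ (a : T ⟶ A.X (n + 1 + 1 + 1)) (α : c ⟶ a ≫ A.d (n + 1 + 1)),
    γ = (α ▷ A.d (n + 1)) ≫
        eqToHom (Bicategory.Strict.assoc a (A.d (n + 1 + 1)) (A.d (n + 1))) ≫
        (a ◁ A.δ (n + 1)) ≫ eqToHom (comp_zmap a (A.X (n + 1)))

/-- `𝐛`-exactness of a secondary chain complex, `𝐛` being the full track subcategory
on the objects satisfying `Pb`: every `𝐛`-cycle is a `𝐛`-boundary. -/
def IsSecExact (A : SecChainComplex B) (Pb : B → Prop) : Prop :=
  ∀ (n : ℤ) (T : B), Pb T → ∀ (c : T ⟶ A.X (n + 1 + 1))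
    (γ : c ≫ A.d (n + 1) ⟶ zmap T (A.X (n + 1))),
    A.IsSecCycle n c γ → A.IsSecBoundary n c γ

/-- A `B₀`-augmented secondary chain complex: `X_{-1} = B₀`, `X_{-n} = ∗` and
`δ_{-n}` the identity track for `n > 1`. -/
structure IsAugmented (A : SecChainComplex B) (B₀ : B) : Prop where
  eq_neg_one : A.X (-1) = B₀
  eq_zero_of_lt : ∀ n : ℤ, n < -1 → A.X n = StrictZero.zobj (B := B)
  δ_eqToHom : ∀ n : ℤ, n < -1 →
    ∀ h : A.d (n + 1) ≫ A.d n = zmap (A.X (n + 1 + 1)) (A.X n), A.δ n = eqToHom h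

/-- A `𝐛`-resolution of `B₀`: a `𝐛`-exact `B₀`-augmented secondary chain complex with
all terms in nonnegative degrees in `𝐛`. -/
structure IsSecResolution (A : SecChainComplex B) (Pb : B → Prop) (B₀ : B) : Prop where
  augmented : A.IsAugmented B₀
  exact : A.IsSecExact Pb
  mem : ∀ n : ℤ, 0 ≤ n → Pb (A.X n)

end SecChainComplex

/-- A `ℤ`-indexed chain complex in an additive category `C`. -/
structure ChainComplexZ (C : Type*) [Category C] [Preadditive C] where
  X : ℤ → C
  d : ∀ n : ℤ, X (n + 1) ⟶ X n
  dd : ∀ n : ℤ, d (n + 1) ≫ d n = 0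

namespace ChainComplexZ

variable {C : Type*} [Category C] [Preadditive C]

/-- The chain complex of abelian groups `Hom(T, A_•)` is exact (acyclic). -/
def HomExact (A : ChainComplexZ C) (T : C) : Prop :=
  ∀ (n : ℤ) (a : T ⟶ A.X (n + 1)), a ≫ A.d n = 0 →
    ∃ b : T ⟶ A.X (n + 1 + 1), b ≫ A.d (n + 1) = a

/-- `𝐚`-exactness of a chain complex, where `𝐚` is the full subcategory on the
objects satisfying `P`. -/
def aExact (A : ChainComplexZ C) (P : C → Prop) : Prop :=
  ∀ T : C, P T → A.HomExact T

end ChainComplexZ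

/-! ### The homotopy category of a track category, and additive track categories -/

section HomotopyCategory

variable (B : Type u) [Bicategory.{w, v} B] [Bicategory.Strict B]

/-- The underlying (1-)category of a strict track category. -/
instance (priority := 100) trackUnderlyingCategory : Category.{v} B :=
  { (inferInstance : CategoryStruct.{v} B) with
    id_comp := fun f => Bicategory.Strict.id_comp f
    comp_id := fun f => Bicategory.Strict.comp_id f
    assoc := fun f g h => Bicategory.Strict.assoc f g h }

/-- Two maps are homotopic if there is a track between them. -/
def homotopyRel : HomRel B := fun {X Y} (f g : X ⟶ Y) => Nonempty ((f : X ⟶ Y) ⟶ g)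

/-- The homotopy category `𝐀 = 𝐁_≃` of the track category `𝐁`, obtained by
identifying homotopic maps. -/
abbrev HoCat := CategoryTheory.Quotient (homotopyRel B)

variable {B}

/-- An object of `𝐁`, seen in the homotopy category. -/
def hQ (X : B) : HoCat B := (CategoryTheory.Quotient.functor (homotopyRel B)).obj X

/-- The homotopy class of a map. -/
def hQm {X Y : B} (f : X ⟶ Y) : hQ X ⟶ hQ Y :=
  (CategoryTheory.Quotient.functor (homotopyRel B)).map f

end HomotopyCategory

section Image

variable {B : Type u} [Bicategory.{w, v} B] [Bicategory.Strict B] [StrictZero B]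
  [Preadditive (HoCat B)]

/-- The image `(A, [d])` in the homotopy category of a secondary chain complex
`(A, d, δ)`.  (The hypothesis `hzero` states that the homotopy class of the zero map
`0_{X,Y}` is the zero element of the abelian hom-group of the additive homotopy
category.) -/
def SecChainComplex.hoComplex (S : SecChainComplex B)
    (hzero : ∀ X Y : B, hQm (zmap X Y) = (0 : hQ X ⟶ hQ Y)) :
    ChainComplexZ (HoCat B) where
  X n := hQ (S.X n)
  d n := hQm (S.d n)
  dd n := by
    have h1 : hQm (S.d (n + 1)) ≫ hQm (S.d n) = hQm (S.d (n + 1) ≫ S.d n) :=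
      ((CategoryTheory.Quotient.functor (homotopyRel B)).map_comp _ _).symm
    have h2 : hQm (S.d (n + 1) ≫ S.d n) = hQm (zmap (S.X (n + 1 + 1)) (S.X n)) :=
      CategoryTheory.Quotient.sound _ ⟨S.δ n⟩
    rw [h1, h2, hzero]

end Image

section Linear

variable (B : Type u) [Bicategory.{w, v} B] [Bicategory.Strict B] [StrictZero B]
  [Preadditive (HoCat B)]

/-- An `𝕃`-additive track category: an additive endofunctor `𝕃` of the additive
homotopy category `𝐀`, left-representing the bifunctor `D`, i.e. together with a
system of isomorphisms `σ_f : D(X,Y) = Hom_𝐀(𝕃X, Y) ≅ Aut(f)` as in the definition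
of a linear track extension. -/
structure LAdditiveStr where
  L : HoCat B ⥤ HoCat B
  Ladd : L.Additive
  σ : ∀ {X Y : B} (f : X ⟶ Y), (L.obj (hQ X) ⟶ hQ Y) ≃ (f ⟶ f)
  σ_add : ∀ {X Y : B} (f : X ⟶ Y) (a b : L.obj (hQ X) ⟶ hQ Y),
    σ f (a + b) = σ f a ≫ σ f b
  σ_post : ∀ {X Y Z : B} (f : X ⟶ Y) (g : Y ⟶ Z) (a : L.obj (hQ X) ⟶ hQ Y),
    σ (f ≫ g) (a ≫ hQm g) = σ f a ▷ g
  σ_pre : ∀ {X Y Z : B} (f : X ⟶ Y) (g : Y ⟶ Z) (b : L.obj (hQ Y) ⟶ hQ Z),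
    σ (f ≫ g) (L.map (hQm f) ≫ b) = f ◁ σ g b
  σ_natural : ∀ {X Y : B} {f f' : X ⟶ Y} (η : f ⟶ f') (a : L.obj (hQ X) ⟶ hQ Y),
    σ f a ≫ η = η ≫ σ f' a

/-- An `ℝ`-additive track category: an additive endofunctor `ℝ` of the additive
homotopy category `𝐀` right-representing the bifunctor `D`, with isomorphisms
`σ_f : D(X,Y) = Hom_𝐀(X, ℝY) ≅ Aut(f)`. -/
structure RAdditiveStr where
  R : HoCat B ⥤ HoCat B
  Radd : R.Additive
  Rzero : ∀ {X Y : HoCat B}, R.map (0 : X ⟶ Y) = 0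
  σ : ∀ {X Y : B} (f : X ⟶ Y), (hQ X ⟶ R.obj (hQ Y)) ≃ (f ⟶ f)
  σ_add : ∀ {X Y : B} (f : X ⟶ Y) (a b : hQ X ⟶ R.obj (hQ Y)),
    σ f (a + b) = σ f a ≫ σ f b
  σ_post : ∀ {X Y Z : B} (f : X ⟶ Y) (g : Y ⟶ Z) (a : hQ X ⟶ R.obj (hQ Y)),
    σ (f ≫ g) (a ≫ R.map (hQm g)) = σ f a ▷ g
  σ_pre : ∀ {X Y Z : B} (f : X ⟶ Y) (g : Y ⟶ Z) (b : hQ Y ⟶ R.obj (hQ Z)),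
    σ (f ≫ g) (hQm f ≫ b) = f ◁ σ g b
  σ_natural : ∀ {X Y : B} {f f' : X ⟶ Y} (η : f ⟶ f') (a : hQ X ⟶ R.obj (hQ Y)),
    σ f a ≫ η = η ≫ σ f' a

end Linear

/-- Mapping a `ℤ`-indexed chain complex through a zero-preserving functor. -/
def ChainComplexZ.mapComplex {C : Type*} [Category C] [Preadditive C]
    {D : Type*} [Category D] [Preadditive D] (A : ChainComplexZ C) (F : C ⥤ D)
    (hF : ∀ {X Y : C}, F.map (0 : X ⟶ Y) = 0) : ChainComplexZ D where
  X n := F.obj (A.X n)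
  d n := F.map (A.d n)
  dd n := by rw [← F.map_comp, A.dd n, hF]

/-!
STATEMENT 13. Let `𝐁` be an additive track category (a track category with strict
zero object whose homotopy category `𝐀 = 𝐁_≃` is additive and which is a linear track
extension of `𝐀` by a bifunctor `D`), `𝐛` a full track subcategory (objects `Pb`) and
`𝐚 = 𝐛_≃`.  Suppose (a) `𝐁` is `𝕃`-additive and `𝐚` is closed under `𝕃`, or
(b) `𝐁` is `ℝ`-additive and `ℝ` preserves `𝐚`-exactness of chain complexes in `𝐀`.
Then for any secondary chain complex `(A,d,δ)` in `𝐁`, `𝐚`-exactness of its image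
`(A,[d])` in `𝐀` implies `𝐛`-exactness of `(A,d,δ)`.
-/


/-! ### Auxiliary lemmas for the proof of Statement 13 -/

section AuxTrack

variable {B' : Type u} [Bicategory.{w, v} B'] [Bicategory.Strict B']

lemma eqToHom_whiskerRight_track {X Y Z : B'} {f g : X ⟶ Y} (h : f = g) (k : Y ⟶ Z) :
    eqToHom h ▷ k = eqToHom (congrArg (· ≫ k) h) := by subst h; simp

lemma whiskerLeft_eqToHom_track {X Y Z : B'} (k : X ⟶ Y) {f g : Y ⟶ Z} (h : f = g) :
    k ◁ eqToHom h = eqToHom (congrArg (k ≫ ·) h) := by subst h; simp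

lemma whiskerRight_comp_track {W X Y Z : B'} {f f' : W ⟶ X} (η : f ⟶ f')
    (g : X ⟶ Y) (h : Y ⟶ Z) :
    η ▷ (g ≫ h) = eqToHom (Bicategory.Strict.assoc f g h).symm ≫ ((η ▷ g) ▷ h) ≫
      eqToHom (Bicategory.Strict.assoc f' g h) := by
  rw [Bicategory.whiskerRight_comp, Bicategory.Strict.associator_eqToIso,
    Bicategory.Strict.associator_eqToIso]
  simp

lemma whiskerRight_whiskerRight_track {W X Y Z : B'} {f f' : W ⟶ X} (η : f ⟶ f')
    (g : X ⟶ Y) (h : Y ⟶ Z) :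
    (η ▷ g) ▷ h = eqToHom (Bicategory.Strict.assoc f g h) ≫ (η ▷ (g ≫ h)) ≫
      eqToHom (Bicategory.Strict.assoc f' g h).symm := by
  rw [whiskerRight_comp_track]; simp

lemma whiskerLeft_whiskerLeft_track {W X Y Z : B'} (f : W ⟶ X) (g : X ⟶ Y)
    {h h' : Y ⟶ Z} (η : h ⟶ h') :
    f ◁ (g ◁ η) = eqToHom (Bicategory.Strict.assoc f g h).symm ≫ ((f ≫ g) ◁ η) ≫
      eqToHom (Bicategory.Strict.assoc f g h') := by
  rw [Bicategory.comp_whiskerLeft, Bicategory.Strict.associator_eqToIso,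
    Bicategory.Strict.associator_eqToIso]
  simp

lemma whisker_assoc_track {W X Y Z : B'} (f : W ⟶ X) {g g' : X ⟶ Y} (η : g ⟶ g')
    (h : Y ⟶ Z) :
    (f ◁ η) ▷ h = eqToHom (Bicategory.Strict.assoc f g h) ≫ (f ◁ (η ▷ h)) ≫
      eqToHom (Bicategory.Strict.assoc f g' h).symm := by
  rw [Bicategory.whisker_assoc, Bicategory.Strict.associator_eqToIso,
    Bicategory.Strict.associator_eqToIso]
  simp

variable [StrictZero B']

/-- Any track between maps into the strict zero object is an `eqToHom`. -/
lemma track_to_zero_eq {X : B'} {f g : X ⟶ StrictZero.zobj (B := B')} (η : f ⟶ g) :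
    η = eqToHom (by haveI := StrictZero.uniqueTo (B := B') X; exact Subsingleton.elim f g) := by
  haveI := StrictZero.uniqueTrackTo (B := B') X f g
  exact Subsingleton.elim _ _

/-- Whiskering any track with the zero map on the right gives an `eqToHom`. -/
lemma whiskerRight_zmap_track {T X Y : B'} {f g : T ⟶ X} (η : f ⟶ g) :
    η ▷ zmap X Y = eqToHom ((comp_zmap f Y).trans (comp_zmap g Y).symm) := by
  show η ▷ ((StrictZero.uniqueTo X).default ≫ (StrictZero.uniqueFrom Y).default) = _
  rw [whiskerRight_comp_track, track_to_zero_eq (η ▷ (StrictZero.uniqueTo X).default),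
    eqToHom_whiskerRight_track]
  simp
  rfl

/-- The canonical track of a secondary boundary is automatically a secondary cycle. -/
lemma boundary_track_isCycle (S : SecChainComplex B') {T : B'} (n : ℤ)
    (a₀ : T ⟶ S.X (n + 1 + 1 + 1)) {c : T ⟶ S.X (n + 1 + 1)}
    (α₀ : c ⟶ a₀ ≫ S.d (n + 1 + 1)) :
    S.IsSecCycle n c ((α₀ ▷ S.d (n + 1)) ≫
        eqToHom (Bicategory.Strict.assoc a₀ (S.d (n + 1 + 1)) (S.d (n + 1))) ≫
        (a₀ ◁ S.δ (n + 1)) ≫ eqToHom (comp_zmap a₀ (S.X (n + 1)))) := by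
  unfold SecChainComplex.IsSecCycle
  have hδ : S.δ (n + 1) ▷ S.d n =
      (eqToHom (Bicategory.Strict.assoc (S.d (n + 1 + 1)) (S.d (n + 1)) (S.d n)) ≫
        (S.d (n + 1 + 1) ◁ S.δ n) ≫ eqToHom (comp_zmap (S.d (n + 1 + 1)) (S.X n))) ≫
        eqToHom (zmap_comp (S.X (n + 1 + 1 + 1)) (S.d n)).symm := by
    rw [← S.compat n]; simp
  simp only [Bicategory.comp_whiskerRight, eqToHom_whiskerRight_track,
    whisker_assoc_track, whiskerRight_whiskerRight_track, hδ,
    Bicategory.whiskerLeft_comp, whiskerLeft_eqToHom_track,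
    whiskerLeft_whiskerLeft_track, Category.assoc, eqToHom_trans,
    eqToHom_trans_assoc, eqToHom_refl, Category.id_comp, Category.comp_id]
  rw [← Bicategory.whisker_exchange_assoc]
  rw [whiskerRight_zmap_track]
  simp

end AuxTrack

lemma endo_eq_id {C : Type*} [Category C] {X : C} (e : X ⟶ X)
    (h : e = e ≫ e) (hi : IsIso e) : e = 𝟙 X := by
  have h2 : e ≫ inv e = (e ≫ e) ≫ inv e := by rw [← h]
  simpa using h2.symm

theorem statement13 {B : Type u} [Bicategory.{w, v} B] [Bicategory.Strict B]
    [StrictZero B]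
    -- all tracks are invertible:
    (hinv : ∀ {X' Y' : B} {f g : X' ⟶ Y'} (η : f ⟶ g), IsIso η)
    -- the homotopy category is additive:
    [Preadditive (HoCat B)] [CategoryTheory.Limits.HasFiniteBiproducts (HoCat B)]
    (hzero : ∀ X Y : B, hQm (zmap X Y) = (0 : hQ X ⟶ hQ Y))
    -- the full track subcategory `𝐛` and the corresponding subcategory `𝐚 = 𝐛_≃`:
    (Pb : B → Prop)
    -- (a) `𝕃`-additive and `𝐚` closed under suspension, or (b) `ℝ`-additive with `ℝ`
    -- preserving `𝐚`-exactness: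
    (hLR :
      (∃ l : LAdditiveStr B, ∀ Z : HoCat B, Pb Z.as → Pb ((l.L.obj Z).as)) ∨
      (∃ r : RAdditiveStr B, ∀ A : ChainComplexZ (HoCat B),
         A.aExact (fun Z => Pb Z.as) →
         (A.mapComplex r.R r.Rzero).aExact (fun Z => Pb Z.as)))
    (S : SecChainComplex B)
    (hex : (S.hoComplex hzero).aExact (fun Z => Pb Z.as)) :
    S.IsSecExact Pb := by
  -- `homotopyRel` is a congruence, since all tracks are invertible
  haveI : Congruence (homotopyRel B) :=
    { equivalence :=
        { refl := fun f => ⟨𝟙 f⟩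
          symm := fun h => h.elim fun η => ⟨by haveI := hinv η; exact inv η⟩
          trans := fun h h' => h.elim fun η => h'.elim fun θ => ⟨η ≫ θ⟩ }
      comp_left := @fun _ _ _ f _ _ h => h.elim fun η => ⟨f ◁ η⟩
      comp_right := @fun _ _ _ _ _ g h => h.elim fun η => ⟨η ▷ g⟩ }
  intro n T hT c γ hcyc
  -- Step 1: lift `[c]` through `[d (n+1+1)]` in the homotopy category
  have hc0 : hQm c ≫ hQm (S.d (n + 1)) = 0 := by
    have h1 : hQm c ≫ hQm (S.d (n + 1)) = hQm (c ≫ S.d (n + 1)) :=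
      ((CategoryTheory.Quotient.functor (homotopyRel B)).map_comp _ _).symm
    have h2 : hQm (c ≫ S.d (n + 1)) = hQm (zmap T (S.X (n + 1))) :=
      CategoryTheory.Quotient.sound _ ⟨γ⟩
    rw [h1, h2, hzero]
  obtain ⟨b, hb⟩ := hex (hQ T) hT (n + 1) (hQm c) hc0
  obtain ⟨a₀, ha₀⟩ := (CategoryTheory.Quotient.functor (homotopyRel B)).map_surjective b
  have hb' : hQm a₀ ≫ hQm (S.d (n + 1 + 1)) = hQm c := by
    unfold hQm; rw [ha₀]; exact hb
  have htrack : homotopyRel B (a₀ ≫ S.d (n + 1 + 1)) c := by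
    apply (CategoryTheory.Quotient.functor_map_eq_iff (homotopyRel B) _ _).1
    show hQm (a₀ ≫ S.d (n + 1 + 1)) = hQm c
    rw [show hQm (a₀ ≫ S.d (n + 1 + 1)) = hQm a₀ ≫ hQm (S.d (n + 1 + 1)) from
      (CategoryTheory.Quotient.functor (homotopyRel B)).map_comp _ _, hb']
  obtain ⟨α₀'⟩ := htrack
  haveI := hinv α₀'
  -- the canonical comparison track and its tail
  let α₀ : c ⟶ a₀ ≫ S.d (n + 1 + 1) := inv α₀'
  let tail : (a₀ ≫ S.d (n + 1 + 1)) ≫ S.d (n + 1) ⟶ zmap T (S.X (n + 1)) :=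
    eqToHom (Bicategory.Strict.assoc a₀ (S.d (n + 1 + 1)) (S.d (n + 1))) ≫
      (a₀ ◁ S.δ (n + 1)) ≫ eqToHom (comp_zmap a₀ (S.X (n + 1)))
  let γ' : c ≫ S.d (n + 1) ⟶ zmap T (S.X (n + 1)) := (α₀ ▷ S.d (n + 1)) ≫ tail
  have hcyc' : S.IsSecCycle n c γ' := boundary_track_isCycle S n a₀ α₀
  -- both cycle conditions give the same whiskering with `d n`
  have hwd : γ ▷ S.d n = γ' ▷ S.d n := by
    have h := hcyc.trans hcyc'.symm
    exact (cancel_mono (eqToHom (zmap_comp T (S.d n)))).1 h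
  haveI := hinv γ'
  let eps : zmap T (S.X (n + 1)) ⟶ zmap T (S.X (n + 1)) := inv γ' ≫ γ
  have hγ'eps : γ' ≫ eps = γ := by simp [eps]
  haveI hiso' : IsIso (γ' ▷ S.d n) :=
    ⟨⟨inv γ' ▷ S.d n, by rw [← Bicategory.comp_whiskerRight, IsIso.hom_inv_id]; simp,
      by rw [← Bicategory.comp_whiskerRight, IsIso.inv_hom_id]; simp⟩⟩
  have hepsd : eps ▷ S.d n = 𝟙 (zmap T (S.X (n + 1)) ≫ S.d n) := by
    have h : (γ' ▷ S.d n) ≫ (eps ▷ S.d n) = (γ' ▷ S.d n) ≫ 𝟙 _ := by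
      rw [← Bicategory.comp_whiskerRight, hγ'eps, Category.comp_id, hwd]
    exact (cancel_epi (γ' ▷ S.d n)).1 h
  -- it suffices to correct `α₀` by an automorphism `τ`
  suffices hτ : ∃ τ : a₀ ≫ S.d (n + 1 + 1) ⟶ a₀ ≫ S.d (n + 1 + 1),
      (τ ▷ S.d (n + 1)) ≫ tail = tail ≫ eps by
    obtain ⟨τ, hτ⟩ := hτ
    refine ⟨a₀, α₀ ≫ τ, ?_⟩
    have : γ = ((α₀ ≫ τ) ▷ S.d (n + 1)) ≫ tail := by
      rw [Bicategory.comp_whiskerRight, Category.assoc, hτ, ← hγ'eps]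
      show γ' ≫ eps = (α₀ ▷ S.d (n + 1)) ≫ tail ≫ eps
      rw [show γ' = (α₀ ▷ S.d (n + 1)) ≫ tail from rfl, Category.assoc]
    exact this
  -- produce `τ` in the two cases
  rcases hLR with ⟨l, hl⟩ | ⟨r, hr⟩
  · -- 𝕃-additive case
    have hσ0 : ∀ {X Y : B} (f : X ⟶ Y), l.σ f 0 = 𝟙 f := by
      intro X Y f
      exact endo_eq_id _ (by simpa using l.σ_add f 0 0) (hinv _)
    let ξ : l.L.obj (hQ T) ⟶ hQ (S.X (n + 1)) := (l.σ (zmap T (S.X (n + 1)))).symm eps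
    have hσξ : l.σ (zmap T (S.X (n + 1))) ξ = eps := Equiv.apply_symm_apply _ _
    have hξd : ξ ≫ hQm (S.d n) = 0 := by
      apply (l.σ (zmap T (S.X (n + 1)) ≫ S.d n)).injective
      rw [l.σ_post, hσξ, hepsd, hσ0]
    obtain ⟨η, hη⟩ := hex (l.L.obj (hQ T)) (hl (hQ T) hT) n ξ hξd
    have hη' : η ≫ hQm (S.d (n + 1)) = ξ := hη
    refine ⟨l.σ (a₀ ≫ S.d (n + 1 + 1)) η, ?_⟩
    have hτd : (l.σ (a₀ ≫ S.d (n + 1 + 1)) η) ▷ S.d (n + 1) =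
        l.σ ((a₀ ≫ S.d (n + 1 + 1)) ≫ S.d (n + 1)) ξ := by
      rw [← hη']; exact (l.σ_post _ _ _).symm
    rw [hτd, l.σ_natural tail ξ, hσξ]
  · -- ℝ-additive case
    have hσ0 : ∀ {X Y : B} (f : X ⟶ Y), r.σ f 0 = 𝟙 f := by
      intro X Y f
      exact endo_eq_id _ (by simpa using r.σ_add f 0 0) (hinv _)
    let ξ : hQ T ⟶ r.R.obj (hQ (S.X (n + 1))) := (r.σ (zmap T (S.X (n + 1)))).symm eps
    have hσξ : r.σ (zmap T (S.X (n + 1))) ξ = eps := Equiv.apply_symm_apply _ _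
    have hξd : ξ ≫ r.R.map (hQm (S.d n)) = 0 := by
      apply (r.σ (zmap T (S.X (n + 1)) ≫ S.d n)).injective
      rw [r.σ_post, hσξ, hepsd, hσ0]
    obtain ⟨η, hη⟩ := hr (S.hoComplex hzero) hex (hQ T) hT n ξ hξd
    have hη' : η ≫ r.R.map (hQm (S.d (n + 1))) = ξ := hη
    refine ⟨r.σ (a₀ ≫ S.d (n + 1 + 1)) η, ?_⟩
    have hτd : (r.σ (a₀ ≫ S.d (n + 1 + 1)) η) ▷ S.d (n + 1) =
        r.σ ((a₀ ≫ S.d (n + 1 + 1)) ≫ S.d (n + 1)) ξ := by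
      rw [← hη']; exact (r.σ_post _ _ _).symm
    rw [hτd, r.σ_natural tail ξ, hσξ]
end

section
/- Let 𝐁 be an additive track category, 𝐛 a full track subcategory with 𝐚 = 𝐛_≃, satisfying either (a) 𝐁 is 𝕃-additive and 𝐚 is closed under 𝕃, or (b) 𝐁 is ℝ-additive and ℝ preserves 𝐚-exactness and 𝐚 is closed under ℝ. Let (X_•,d,δ) be a 𝐛-exact 𝐛-resolution of an object X and Y any object. For a cocycle class [c] ∈ Ext^n_𝐚(X,Y) (represented by c : X_n → Y with [c][d_n] = 0) and a chosen track γ : 0 ⇒ cd_n, the cohomology class of Γ_{c,γ} = cδ_n □ γd_{n+1} in H^{n+2}(Aut(0_{X_•,Y})) ≅ Ext^{n+2}_𝐚(X,Y)^1 does not depend on the choice of the representative c, of the track γ, or of the 𝐛-resolution of X, and the assignment [c] ↦ [Γ_{c,γ}] defines a group homomorphism d_(2)^{n,m} : Ext^n_𝐚(X,Y)^m → Ext^{n+2}_𝐚(X,Y)^{m+1} (the secondary differential). -/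
/-!
Track categories.  A track category is a category enriched in groupoids, i.e. a strict
2-category (`Bicategory` + `Bicategory.Strict`) all of whose 2-cells ("tracks") are
invertible.  Invertibility of all 2-cells is imposed by the hypothesis `hinv` below.
A strict zero object is an object whose hom-groupoids from and to any object are
trivial (exactly one map, exactly one track).
-/

open CategoryTheory CategoryTheory.Bicategory

universe w v u

section Gamma

variable {B : Type u} [Bicategory.{w, v} B] [Bicategory.Strict B] [StrictZero B]

/-- The track `Γ_{c,γ} = cδ □ γd₁ ∈ Aut(0_{A₂,Y})` associated to maps
`d₁ : A₂ ⟶ A₁`, `d₀ : A₁ ⟶ A₀`, a track `δ : d₀d₁ ⇒ 0`, a map `c : A₀ ⟶ Y` and a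
track `γ : 0 ⇒ c d₀`. -/
def GammaGen {A₂ A₁ A₀ Y : B} (d₁ : A₂ ⟶ A₁) (d₀ : A₁ ⟶ A₀)
    (δ : (d₁ ≫ d₀) ⟶ zmap A₂ A₀) (c : A₀ ⟶ Y) (γ : zmap A₁ Y ⟶ d₀ ≫ c) :
    zmap A₂ Y ⟶ zmap A₂ Y :=
  eqToHom (comp_zmap d₁ Y).symm ≫ (d₁ ◁ γ) ≫
    eqToHom (Bicategory.Strict.assoc d₁ d₀ c).symm ≫ (δ ▷ c) ≫
    eqToHom (zmap_comp A₂ c)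

/-- `Γ_{c,γ}` for a cocycle `c : X_n ⟶ Y` on a secondary chain complex and a track
`γ : 0 ⇒ c d_n`. -/
def SecChainComplex.Gamma (S : SecChainComplex B) {Y : B} (n : ℤ)
    (c : S.X n ⟶ Y) (γ : zmap (S.X (n + 1)) Y ⟶ S.d n ≫ c) :
    zmap (S.X (n + 1 + 1)) Y ⟶ zmap (S.X (n + 1 + 1)) Y :=
  GammaGen (S.d (n + 1)) (S.d n) (S.δ n) c γ

end Gamma

section SecMap

variable {B : Type u} [Bicategory.{w, v} B] [Bicategory.Strict B] [StrictZero B]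

/-- A secondary chain map `(f,φ) : (A,d,δ) → (A',d',δ')`: maps `f_n : A_n ⟶ A'_n` and
tracks `φ_n : f_n d_n ⇒ d'_n f_{n+1}` such that
`δ'_{n-1} f_{n+1} □ d'_{n-1} φ_n □ φ_{n-1} d_n = f_{n-1} δ_{n-1}` for all `n`. -/
def IsSecChainMap (A A' : SecChainComplex B) (f : ∀ n : ℤ, A.X n ⟶ A'.X n)
    (φ : ∀ n : ℤ, (A.d n ≫ f n) ⟶ (f (n + 1) ≫ A'.d n)) : Prop :=
  ∀ n : ℤ,
    eqToHom (Bicategory.Strict.assoc (A.d (n + 1)) (A.d n) (f n)) ≫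
        (A.d (n + 1) ◁ φ n) ≫
        eqToHom (Bicategory.Strict.assoc (A.d (n + 1)) (f (n + 1)) (A'.d n)).symm ≫
        (φ (n + 1) ▷ A'.d n) ≫
        eqToHom (Bicategory.Strict.assoc (f (n + 1 + 1)) (A'.d (n + 1)) (A'.d n)) ≫
        (f (n + 1 + 1) ◁ A'.δ n) ≫
        eqToHom (comp_zmap (f (n + 1 + 1)) (A'.X n)) =
      (A.δ n ▷ f n) ≫ eqToHom (zmap_comp (A.X (n + 1 + 1)) (f n))

end SecMap

section GammaCob

variable {B : Type u} [Bicategory.{w, v} B] [Bicategory.Strict B] [StrictZero B]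

/-- The coboundary `Λ d_k` in the cochain complex `Aut(0_{X_•,Y})` of an element
`Λ ∈ Aut(0_{X_k,Y})`. -/
def GammaCob (S : SecChainComplex B) (Y : B) (k : ℤ)
    (Λ : zmap (S.X k) Y ⟶ zmap (S.X k) Y) :
    zmap (S.X (k + 1)) Y ⟶ zmap (S.X (k + 1)) Y :=
  eqToHom (comp_zmap (S.d k) Y).symm ≫ (S.d k ◁ Λ) ≫ eqToHom (comp_zmap (S.d k) Y)

/-- Two elements of `Aut(0_{X_{k+1},Y})` are cohomologous in the cochain complex
`Aut(0_{X_•,Y})`, i.e. differ by a coboundary. -/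
def GammaCohomologous (S : SecChainComplex B) (Y : B) (k : ℤ)
    (Γ Γ' : zmap (S.X (k + 1)) Y ⟶ zmap (S.X (k + 1)) Y) : Prop :=
  ∃ Λ : zmap (S.X k) Y ⟶ zmap (S.X k) Y, Γ' = Γ ≫ GammaCob S Y k Λ

end GammaCob

/-!
STATEMENT 16. The secondary differential.  Let `𝐁` be an additive track category,
`𝐛` a full track subcategory (objects `Pb`), `𝐚 = 𝐛_≃`, satisfying (a) `𝐁` is
`𝕃`-additive and `𝐚` is closed under `𝕃`, or (b) `𝐁` is `ℝ`-additive, `ℝ` preserves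
`𝐚`-exactness and `𝐚` is closed under `ℝ`.  Let `(X_•,d,δ)` be a `𝐛`-exact
`𝐛`-resolution of `X₀` and `Y` any object.  For a cocycle `c : X_n ⟶ Y`
(`[c][d_n] = 0`) and a track `γ : 0 ⇒ c d_n`, the class of
`Γ_{c,γ} = c δ_n □ γ d_{n+1}` in `H^{n+2}(Aut(0_{X_•,Y})) ≅ Ext^{n+2}_𝐚(X,Y)^1`
does not depend on the choice of `γ` (1), of the representing cocycle `c` (2), or of
the `𝐛`-resolution (4, via the comparison maps of secondary resolutions), and
`[c] ↦ [Γ_{c,γ}]` is additive (3); hence it defines a group homomorphism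
`d₍₂₎ : Ext^n_𝐚(X,Y)^m → Ext^{n+2}_𝐚(X,Y)^{m+1}` (the grading `m` being handled by
replacing `X` by `𝕃^m X`, resp. `Y` by `ℝ^m Y`).
-/

/-! ### Preliminaries for the proof -/

set_option linter.unusedSectionVars false

section ProofPrelim

variable {B : Type u} [Bicategory.{w, v} B] [Bicategory.Strict B] [StrictZero B]

attribute [local instance] StrictZero.uniqueTo StrictZero.uniqueFrom
  StrictZero.uniqueTrackTo StrictZero.uniqueTrackFrom

lemma eqToHom_whiskerRight' {X Y Z : B} {f g : X ⟶ Y} (p : f = g) (h : Y ⟶ Z) :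
    eqToHom p ▷ h = eqToHom (by rw [p]) := by
  subst p; simp

lemma whiskerLeft_eqToHom' {X Y Z : B} (f : X ⟶ Y) {g h : Y ⟶ Z} (p : g = h) :
    f ◁ eqToHom p = eqToHom (by rw [p]) := by
  subst p; simp

/-- Whiskering a track into the zero map on the right gives an `eqToHom`. -/
lemma whiskerRight_zmap {X X' : B} {f g : X ⟶ X'} (η : f ⟶ g) (Y : B) :
    η ▷ zmap X' Y = eqToHom (by rw [comp_zmap f Y, comp_zmap g Y]) := by
  unfold zmap
  rw [Bicategory.whiskerRight_comp]
  have p : f ≫ (StrictZero.uniqueTo (B := B) X').default =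
      g ≫ (StrictZero.uniqueTo (B := B) X').default := Subsingleton.elim _ _
  have h1 : η ▷ (StrictZero.uniqueTo (B := B) X').default = eqToHom p :=
    Subsingleton.elim _ _
  rw [h1, Bicategory.Strict.associator_eqToIso, Bicategory.Strict.associator_eqToIso]
  simp [eqToHom_whiskerRight']

/-- Whiskering a track by the zero map on the left gives an `eqToHom`. -/
lemma zmap_whiskerLeft {Y Z : B} (X : B) {f g : Y ⟶ Z} (η : f ⟶ g) :
    zmap X Y ◁ η = eqToHom (by rw [zmap_comp X f, zmap_comp X g]) := by
  unfold zmap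
  rw [Bicategory.comp_whiskerLeft]
  have p : (StrictZero.uniqueFrom (B := B) Y).default ≫ f =
      (StrictZero.uniqueFrom (B := B) Y).default ≫ g := Subsingleton.elim _ _
  have h1 : (StrictZero.uniqueFrom (B := B) Y).default ◁ η = eqToHom p :=
    Subsingleton.elim _ _
  rw [h1, Bicategory.Strict.associator_eqToIso, Bicategory.Strict.associator_eqToIso]
  simp [whiskerLeft_eqToHom']

end ProofPrelim
section QuotPrelim

variable {B : Type u} [Bicategory.{w, v} B] [Bicategory.Strict B]

lemma hQm_comp {X Y Z : B} (f : X ⟶ Y) (g : Y ⟶ Z) :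
    hQm (f ≫ g) = hQm f ≫ hQm g :=
  (CategoryTheory.Quotient.functor (homotopyRel B)).map_comp f g

lemma hQm_eq_of_track {X Y : B} {f g : X ⟶ Y} (η : f ⟶ g) : hQm f = hQm g :=
  CategoryTheory.Quotient.sound _ ⟨η⟩

lemma hQm_surjective {X Y : B} (e : hQ X ⟶ hQ Y) : ∃ f : X ⟶ Y, hQm f = e :=
  (CategoryTheory.Quotient.functor (homotopyRel B)).map_surjective e

lemma hQm_eqToHom {X Y : B} (p : X = Y) :
    hQm (eqToHom p) = eqToHom (congrArg hQ p) :=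
  eqToHom_map _ p

variable (hinv : ∀ {X' Y' : B} {f g : X' ⟶ Y'} (η : f ⟶ g), IsIso η)

include hinv in
lemma homotopyRel_congruence : CategoryTheory.Congruence (homotopyRel B) where
  equivalence := by
    intro X Y
    constructor
    · exact fun f => ⟨𝟙 f⟩
    · rintro f g ⟨η⟩
      exact ⟨letI := hinv η; CategoryTheory.inv η⟩
    · rintro f g h ⟨η⟩ ⟨θ⟩
      exact ⟨η ≫ θ⟩
  comp_left := by
    rintro X Y Z f g g' ⟨η⟩
    exact ⟨f ◁ η⟩
  comp_right := by
    rintro X Y Z f f' g ⟨η⟩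
    exact ⟨η ▷ g⟩

include hinv in
lemma track_of_hQm {X Y : B} {f g : X ⟶ Y} (h : hQm f = hQm g) :
    Nonempty (f ⟶ g) := by
  haveI := homotopyRel_congruence hinv
  exact (CategoryTheory.Quotient.functor_map_eq_iff (homotopyRel B) f g).mp h

end QuotPrelim
/-! ### A unified interface for the `𝕃`- and `ℝ`-additive structures -/

structure SigmaData (B : Type u) [Bicategory.{w, v} B] [Bicategory.Strict B]
    [StrictZero B] [Preadditive (HoCat B)] where
  D : B → B → Type v
  grp : ∀ X Y : B, AddCommGroup (D X Y)
  σ : ∀ {X Y : B} (f : X ⟶ Y), D X Y ≃ (f ⟶ f)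
  σ_add : ∀ {X Y : B} (f : X ⟶ Y) (a b : D X Y), σ f (a + b) = σ f a ≫ σ f b
  σ_natural : ∀ {X Y : B} {f f' : X ⟶ Y} (η : f ⟶ f') (a : D X Y),
    σ f a ≫ η = η ≫ σ f' a
  pre : ∀ {X Y Z : B} (f : X ⟶ Y), D Y Z → D X Z
  post : ∀ {X Y Z : B} (g : Y ⟶ Z), D X Y → D X Z
  σ_pre : ∀ {X Y Z : B} (f : X ⟶ Y) (g : Y ⟶ Z) (b : D Y Z),
    σ (f ≫ g) (pre f b) = f ◁ σ g b
  σ_post : ∀ {X Y Z : B} (f : X ⟶ Y) (g : Y ⟶ Z) (a : D X Y),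
    σ (f ≫ g) (post g a) = σ f a ▷ g
  pre_add : ∀ {X Y Z : B} (f : X ⟶ Y) (a b : D Y Z),
    pre f (a + b) = pre f a + pre f b
  post_hadd : ∀ {X Y Z : B} {v v₁ v₂ : Y ⟶ Z}, hQm v = hQm v₁ + hQm v₂ →
    ∀ a : D X Y, post v a = post v₁ a + post v₂ a

namespace SigmaData

attribute [instance] SigmaData.grp

variable {B : Type u} [Bicategory.{w, v} B] [Bicategory.Strict B]
    [StrictZero B] [Preadditive (HoCat B)] (sd : SigmaData B)
variable (hinv : ∀ {X' Y' : B} {f g : X' ⟶ Y'} (η : f ⟶ g), IsIso η)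

include hinv in
lemma σ_zero {X Y : B} (f : X ⟶ Y) : sd.σ f 0 = 𝟙 f := by
  have h := sd.σ_add f 0 0
  rw [add_zero] at h
  haveI := hinv (sd.σ f 0)
  calc sd.σ f 0 = sd.σ f 0 ≫ sd.σ f 0 ≫ CategoryTheory.inv (sd.σ f 0) := by
        rw [IsIso.hom_inv_id, Category.comp_id]
    _ = 𝟙 f := by rw [← Category.assoc, ← h, IsIso.hom_inv_id]

/-- The preadditive homomorphism `pre f`. -/
def preHom {X Y Z : B} (f : X ⟶ Y) : sd.D Y Z →+ sd.D X Z :=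
  AddMonoidHom.mk' (sd.pre f) (sd.pre_add f)

lemma pre_neg {X Y Z : B} (f : X ⟶ Y) (a : sd.D Y Z) :
    sd.pre f (-a) = -sd.pre f a :=
  (sd.preHom f).map_neg a

lemma σ_symm_comp {X Y : B} {f : X ⟶ Y} (η θ : f ⟶ f) :
    (sd.σ f).symm (η ≫ θ) = (sd.σ f).symm η + (sd.σ f).symm θ := by
  apply (sd.σ f).injective
  rw [Equiv.apply_symm_apply, sd.σ_add, Equiv.apply_symm_apply, Equiv.apply_symm_apply]

include hinv in
/-- Conjugation by any track (in particular `eqToHom`s) preserves `σ`-coordinates. -/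
lemma σ_conj {X Y : B} {f f' : X ⟶ Y} (η : f ⟶ f') (a : sd.D X Y) :
    letI := hinv η
    CategoryTheory.inv η ≫ sd.σ f a ≫ η = sd.σ f' a := by
  haveI := hinv η
  rw [sd.σ_natural η a, ← Category.assoc, IsIso.inv_hom_id, Category.id_comp]

end SigmaData

/-- The `SigmaData` of an `𝕃`-additive structure. -/
def LAdditiveStr.sigmaData {B : Type u} [Bicategory.{w, v} B] [Bicategory.Strict B]
    [StrictZero B] [Preadditive (HoCat B)] (l : LAdditiveStr B) : SigmaData B where
  D X Y := l.L.obj (hQ X) ⟶ hQ Y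
  grp _ _ := inferInstance
  σ := l.σ
  σ_add := l.σ_add
  σ_natural := l.σ_natural
  pre f b := l.L.map (hQm f) ≫ b
  post g a := a ≫ hQm g
  σ_pre := l.σ_pre
  σ_post := l.σ_post
  pre_add f a b := by rw [Preadditive.comp_add]
  post_hadd h a := by rw [h, Preadditive.comp_add]

/-- The `SigmaData` of an `ℝ`-additive structure. -/
def RAdditiveStr.sigmaData {B : Type u} [Bicategory.{w, v} B] [Bicategory.Strict B]
    [StrictZero B] [Preadditive (HoCat B)] (r : RAdditiveStr B) : SigmaData B where
  D X Y := hQ X ⟶ r.R.obj (hQ Y)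
  grp _ _ := inferInstance
  σ := r.σ
  σ_add := r.σ_add
  σ_natural := r.σ_natural
  pre f b := hQm f ≫ b
  post g a := a ≫ r.R.map (hQm g)
  σ_pre := r.σ_pre
  σ_post := r.σ_post
  pre_add f a b := by rw [Preadditive.comp_add]
  post_hadd h a := by
    haveI := r.Radd
    rw [h, Functor.map_add, Preadditive.comp_add]
/-! ### Core computations on `Γ` -/

namespace SigmaData

section Core

variable {B : Type u} [Bicategory.{w, v} B] [Bicategory.Strict B]
    [StrictZero B] [Preadditive (HoCat B)] (sd : SigmaData B)

lemma σ_natural_assoc {X Y : B} {f f' : X ⟶ Y} (η : f ⟶ f') (a : sd.D X Y)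
    {g : X ⟶ Y} (rest : f' ⟶ g) :
    sd.σ f a ≫ η ≫ rest = η ≫ sd.σ f' a ≫ rest := by
  rw [← Category.assoc, sd.σ_natural, Category.assoc]

variable (hinv : ∀ {X' Y' : B} {f g : X' ⟶ Y'} (η : f ⟶ g), IsIso η)
variable (S : SecChainComplex B) {Y : B} (n : ℤ)

/-- Master lemma: a `σ`-coordinate computation implies cohomologousness. -/
lemma cohomologous_of_cls {Γ Γ' : zmap (S.X (n + 1 + 1)) Y ⟶ zmap (S.X (n + 1 + 1)) Y}
    (t : sd.D (S.X (n + 1)) Y)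
    (h : (sd.σ _).symm Γ' = (sd.σ _).symm Γ + sd.pre (S.d (n + 1)) t) :
    GammaCohomologous S Y (n + 1) Γ Γ' := by
  refine ⟨sd.σ _ t, ?_⟩
  have hcob : GammaCob S Y (n + 1) (sd.σ _ t) =
      sd.σ (zmap (S.X (n + 1 + 1)) Y) (sd.pre (S.d (n + 1)) t) := by
    unfold GammaCob
    rw [← sd.σ_pre, sd.σ_natural]
    rw [← Category.assoc, eqToHom_trans, eqToHom_refl, Category.id_comp]
  rw [hcob]
  calc Γ' = sd.σ _ ((sd.σ _).symm Γ') := (Equiv.apply_symm_apply _ _).symm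
    _ = sd.σ _ ((sd.σ _).symm Γ + sd.pre (S.d (n + 1)) t) := by rw [h]
    _ = sd.σ _ ((sd.σ _).symm Γ) ≫ sd.σ _ (sd.pre (S.d (n + 1)) t) := sd.σ_add _ _ _
    _ = Γ ≫ sd.σ _ (sd.pre (S.d (n + 1)) t) := by rw [Equiv.apply_symm_apply]

/-- Changing the track `γ` by `σ b` changes `Γ` by the coboundary `σ (pre d b)`. -/
lemma gamma_gammachange (c : S.X n ⟶ Y) (γ : zmap (S.X (n + 1)) Y ⟶ S.d n ≫ c)
    (b : sd.D (S.X (n + 1)) Y) :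
    S.Gamma n c (γ ≫ sd.σ (S.d n ≫ c) b) =
      S.Gamma n c γ ≫ sd.σ (zmap (S.X (n + 1 + 1)) Y) (sd.pre (S.d (n + 1)) b) := by
  unfold SecChainComplex.Gamma GammaGen
  rw [Bicategory.whiskerLeft_comp, ← sd.σ_pre]
  simp only [Category.assoc]
  rw [sd.σ_natural_assoc, sd.σ_natural_assoc, sd.σ_natural]

include hinv in
/-- Any two trivializing tracks give `Γ`s differing by a coboundary (cls form). -/
lemma cls_gamma_indep (c : S.X n ⟶ Y) (γ γ' : zmap (S.X (n + 1)) Y ⟶ S.d n ≫ c) :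
    ∃ b : sd.D (S.X (n + 1)) Y,
      (sd.σ _).symm (S.Gamma n c γ') =
        (sd.σ _).symm (S.Gamma n c γ) + sd.pre (S.d (n + 1)) b := by
  haveI := hinv γ
  refine ⟨(sd.σ (S.d n ≫ c)).symm (CategoryTheory.inv γ ≫ γ'), ?_⟩
  have hγ : γ' = γ ≫ sd.σ (S.d n ≫ c) ((sd.σ (S.d n ≫ c)).symm
      (CategoryTheory.inv γ ≫ γ')) := by
    rw [Equiv.apply_symm_apply, ← Category.assoc, IsIso.hom_inv_id, Category.id_comp]
  conv_lhs => rw [hγ, sd.gamma_gammachange]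
  rw [σ_symm_comp, Equiv.symm_apply_apply]

end Core

end SigmaData
section GammaComp

variable {B : Type u} [Bicategory.{w, v} B] [Bicategory.Strict B] [StrictZero B]

variable (S : SecChainComplex B) {Y : B} (n : ℤ)

/-- `Γ` is strictly invariant under replacing `c` by a homotopic map `c'` (with the
induced trivializing track). -/
lemma gamma_homotopic {c c' : S.X n ⟶ Y} (τ : c ⟶ c')
    (γ : zmap (S.X (n + 1)) Y ⟶ S.d n ≫ c) :
    S.Gamma n c' (γ ≫ (S.d n ◁ τ)) = S.Gamma n c γ := by
  unfold SecChainComplex.Gamma GammaGen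
  rw [Bicategory.whiskerLeft_comp]
  have h1 : S.d (n + 1) ◁ (S.d n ◁ τ) =
      eqToHom (Bicategory.Strict.assoc (S.d (n + 1)) (S.d n) c).symm ≫
        ((S.d (n + 1) ≫ S.d n) ◁ τ) ≫
        eqToHom (Bicategory.Strict.assoc (S.d (n + 1)) (S.d n) c') := by
    simp [Bicategory.comp_whiskerLeft, Bicategory.Strict.associator_eqToIso]
  simp only [Category.assoc, h1, eqToHom_trans_assoc, eqToHom_trans, eqToHom_refl, Category.id_comp]
  rw [Bicategory.whisker_exchange_assoc]
  simp [zmap_whiskerLeft, eqToHom_trans]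

/-- `Γ` and postcomposition: whiskering. -/
lemma gamma_post {W : B} (u : S.X n ⟶ W) (γu : zmap (S.X (n + 1)) W ⟶ S.d n ≫ u)
    (v : W ⟶ Y) :
    S.Gamma n (u ≫ v)
        (eqToHom (zmap_comp (S.X (n + 1)) v).symm ≫ (γu ▷ v) ≫
          eqToHom (Bicategory.Strict.assoc (S.d n) u v)) =
      eqToHom (zmap_comp (S.X (n + 1 + 1)) v).symm ≫ (S.Gamma n u γu ▷ v) ≫
        eqToHom (zmap_comp (S.X (n + 1 + 1)) v) := by
  unfold SecChainComplex.Gamma GammaGen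
  simp [Bicategory.comp_whiskerRight, Bicategory.whisker_assoc,
    Bicategory.whiskerRight_comp, Bicategory.Strict.associator_eqToIso,
    eqToHom_whiskerRight', whiskerLeft_eqToHom', eqToHom_trans, Category.assoc,
    Bicategory.whiskerLeft_comp]

end GammaComp
section GammaCls

variable {B : Type u} [Bicategory.{w, v} B] [Bicategory.Strict B] [StrictZero B]
    [Preadditive (HoCat B)] (sd : SigmaData B)
variable (S : SecChainComplex B) {Y : B} (n : ℤ)

/-- `σ`-coordinates of `Γ` after postcomposition. -/
lemma cls_gamma_post {W : B} (u : S.X n ⟶ W) (γu : zmap (S.X (n + 1)) W ⟶ S.d n ≫ u)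
    (v : W ⟶ Y) :
    (sd.σ (zmap (S.X (n + 1 + 1)) Y)).symm
        (S.Gamma n (u ≫ v)
          (eqToHom (zmap_comp (S.X (n + 1)) v).symm ≫ (γu ▷ v) ≫
            eqToHom (Bicategory.Strict.assoc (S.d n) u v))) =
      sd.post v ((sd.σ (zmap (S.X (n + 1 + 1)) W)).symm (S.Gamma n u γu)) := by
  rw [gamma_post]
  set g := (sd.σ (zmap (S.X (n + 1 + 1)) W)).symm (S.Gamma n u γu) with hg
  have h1 : S.Gamma n u γu = sd.σ _ g := (Equiv.apply_symm_apply _ _).symm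
  rw [h1, ← sd.σ_post]
  rw [sd.σ_natural (eqToHom (zmap_comp (S.X (n + 1 + 1)) v)) (sd.post v g)]
  rw [← Category.assoc, eqToHom_trans, eqToHom_refl, Category.id_comp,
    Equiv.symm_apply_apply]

variable (hinv : ∀ {X' Y' : B} {f g : X' ⟶ Y'} (η : f ⟶ g), IsIso η)

include hinv in
/-- `Γ` of a coboundary cocycle `d ≫ h`, with the canonical trivializing track, is
the identity track. -/
lemma gamma_coboundary (k : ℤ) (h : S.X k ⟶ Y) :
    S.Gamma (k + 1) (S.d k ≫ h)
        (eqToHom (zmap_comp (S.X (k + 1 + 1)) h).symm ≫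
          ((letI := hinv (S.δ k); CategoryTheory.inv (S.δ k)) ▷ h) ≫
          eqToHom (Bicategory.Strict.assoc (S.d (k + 1)) (S.d k) h)) =
      𝟙 (zmap (S.X (k + 1 + 1 + 1)) Y) := by
  haveI := hinv (S.δ k)
  have hc : S.δ (k + 1) ▷ S.d k =
      eqToHom (Bicategory.Strict.assoc (S.d (k + 1 + 1)) (S.d (k + 1)) (S.d k)) ≫
        (S.d (k + 1 + 1) ◁ S.δ k) ≫
        eqToHom (comp_zmap (S.d (k + 1 + 1)) (S.X k)) ≫
        eqToHom (zmap_comp (S.X (k + 1 + 1 + 1)) (S.d k)).symm := by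
    rw [← cancel_mono (eqToHom (zmap_comp (S.X (k + 1 + 1 + 1)) (S.d k)))]
    simp only [Category.assoc, eqToHom_trans, eqToHom_refl, Category.comp_id]
    exact S.compat k
  unfold SecChainComplex.Gamma GammaGen
  rw [Bicategory.whiskerRight_comp, hc]
  simp only [Bicategory.whiskerLeft_comp, Bicategory.comp_whiskerRight,
    Bicategory.whisker_assoc, Bicategory.Strict.associator_eqToIso, eqToIso.hom,
    eqToIso.inv, eqToHom_whiskerRight', whiskerLeft_eqToHom', Category.assoc,
    eqToHom_trans_assoc, eqToHom_refl, Category.id_comp]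
  rw [← Bicategory.whiskerLeft_comp_assoc]
  rw [← Bicategory.comp_whiskerRight, IsIso.inv_hom_id]
  simp

end GammaCls
section GammaAdd

variable {B : Type u} [Bicategory.{w, v} B] [Bicategory.Strict B] [StrictZero B]
    [Preadditive (HoCat B)] (sd : SigmaData B)
variable (hinv : ∀ {X' Y' : B} {f g : X' ⟶ Y'} (η : f ⟶ g), IsIso η)
variable (S : SecChainComplex B) {Y : B} (n : ℤ)

include hinv in
lemma gamma_coboundary' (k n' : ℤ) (hkn : k + 1 = n') (h : S.X k ⟶ Y) :
    ∃ γ₀ : zmap (S.X (n' + 1)) Y ⟶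
        S.d n' ≫ (eqToHom (congrArg S.X hkn.symm) ≫ S.d k ≫ h),
      S.Gamma n' (eqToHom (congrArg S.X hkn.symm) ≫ S.d k ≫ h) γ₀ =
        𝟙 (zmap (S.X (n' + 1 + 1)) Y) := by
  subst hkn
  have h1 : eqToHom (congrArg S.X (rfl : k + 1 = k + 1).symm) ≫ S.d k ≫ h =
      S.d k ≫ h :=
    (congrArg (· ≫ S.d k ≫ h) (eqToHom_refl _ _)).trans
      (Bicategory.Strict.id_comp _)
  rw [h1]
  exact ⟨_, gamma_coboundary S hinv k h⟩

variable [Limits.HasFiniteBiproducts (HoCat B)]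

include hinv in
/-- Additivity of the `σ`-coordinate of `Γ` in the cocycle, up to coboundaries. -/
lemma cls_gamma_additive (hzero : ∀ X Y : B, hQm (zmap X Y) = 0)
    (a b s : S.X n ⟶ Y)
    (ha : hQm (S.d n ≫ a) = 0) (hb : hQm (S.d n ≫ b) = 0)
    (hs : hQm s = hQm a + hQm b)
    (γa : zmap (S.X (n + 1)) Y ⟶ S.d n ≫ a)
    (γb : zmap (S.X (n + 1)) Y ⟶ S.d n ≫ b)
    (γs : zmap (S.X (n + 1)) Y ⟶ S.d n ≫ s) :
    ∃ t : sd.D (S.X (n + 1)) Y,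
      (sd.σ _).symm (S.Gamma n s γs) =
        (sd.σ _).symm (S.Gamma n a γa) + (sd.σ _).symm (S.Gamma n b γb) +
          sd.pre (S.d (n + 1)) t := by
  classical
  haveI := Limits.hasBinaryBiproducts_of_finite_biproducts (HoCat B)
  set W : B := (Limits.biprod (hQ Y) (hQ Y)).as with hWdef
  have hW : hQ W = Limits.biprod (hQ Y) (hQ Y) := rfl
  obtain ⟨u, hu⟩ := hQm_surjective
    (Limits.biprod.lift (hQm a) (hQm b) : hQ (S.X n) ⟶ hQ W)
  obtain ⟨v₁, hv₁⟩ := hQm_surjective (Limits.biprod.fst : hQ W ⟶ hQ Y)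
  obtain ⟨v₂, hv₂⟩ := hQm_surjective (Limits.biprod.snd : hQ W ⟶ hQ Y)
  obtain ⟨v₃, hv₃⟩ := hQm_surjective
    (Limits.biprod.fst + Limits.biprod.snd : hQ W ⟶ hQ Y)
  have hu1 : hQm (u ≫ v₁) = hQm a := by
    erw [hQm_comp, hu, hv₁, Limits.biprod.lift_fst]
  have hu2 : hQm (u ≫ v₂) = hQm b := by
    erw [hQm_comp, hu, hv₂, Limits.biprod.lift_snd]
  have hu3 : hQm (u ≫ v₃) = hQm s := by
    erw [hQm_comp, hu, hv₃, hs, Preadditive.comp_add, Limits.biprod.lift_fst,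
      Limits.biprod.lift_snd]
  have hv3' : hQm v₃ = hQm v₁ + hQm v₂ := by rw [hv₁, hv₂, hv₃]; rfl
  have hdu : hQm (zmap (S.X (n + 1)) W) = hQm (S.d n ≫ u) := by
    rw [hzero, hQm_comp, hu]
    apply Limits.biprod.hom_ext
    · erw [Category.assoc, Limits.biprod.lift_fst, ← hQm_comp, ha, Limits.zero_comp]
    · erw [Category.assoc, Limits.biprod.lift_snd, ← hQm_comp, hb, Limits.zero_comp]
  obtain ⟨γu⟩ := track_of_hQm hinv hdu
  set g : sd.D (S.X (n + 1 + 1)) W :=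
    (sd.σ (zmap (S.X (n + 1 + 1)) W)).symm (S.Gamma n u γu) with hgdef
  -- the canonical induced tracks for `u ≫ vᵢ`
  have key : ∀ (v : W ⟶ Y) (c : S.X n ⟶ Y), hQm (u ≫ v) = hQm c →
      ∀ γc : zmap (S.X (n + 1)) Y ⟶ S.d n ≫ c,
      ∃ t : sd.D (S.X (n + 1)) Y,
        (sd.σ _).symm (S.Gamma n c γc) = sd.post v g + sd.pre (S.d (n + 1)) t := by
    intro v c hvc γc
    obtain ⟨τ⟩ := track_of_hQm hinv hvc
    set γv : zmap (S.X (n + 1)) Y ⟶ S.d n ≫ (u ≫ v) :=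
      eqToHom (zmap_comp (S.X (n + 1)) v).symm ≫ (γu ▷ v) ≫
        eqToHom (Bicategory.Strict.assoc (S.d n) u v) with hγv
    obtain ⟨t, ht⟩ := sd.cls_gamma_indep hinv S n c (γv ≫ (S.d n ◁ τ)) γc
    refine ⟨t, ?_⟩
    rw [ht, gamma_homotopic S n τ γv, hγv, cls_gamma_post]
  obtain ⟨t₁, ht₁⟩ := key v₁ a hu1 γa
  obtain ⟨t₂, ht₂⟩ := key v₂ b hu2 γb
  obtain ⟨t₃, ht₃⟩ := key v₃ s hu3 γs
  refine ⟨t₃ - t₁ - t₂, ?_⟩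
  rw [ht₁, ht₂, ht₃, sd.post_hadd hv3' g]
  rw [show t₃ - t₁ - t₂ = t₃ + (-t₁) + (-t₂) by abel, sd.pre_add, sd.pre_add,
    sd.pre_neg, sd.pre_neg]
  abel

end GammaAdd
section GammaMap

variable {B : Type u} [Bicategory.{w, v} B] [Bicategory.Strict B] [StrictZero B]
variable (hinv : ∀ {X' Y' : B} {f g : X' ⟶ Y'} (η : f ⟶ g), IsIso η)
variable {S S' : SecChainComplex B} {Y : B} (n : ℤ)

include hinv in
lemma gamma_chainmap (f : ∀ k : ℤ, S.X k ⟶ S'.X k)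
    (φ : ∀ k : ℤ, (S.d k ≫ f k) ⟶ (f (k + 1) ≫ S'.d k))
    (hmap : IsSecChainMap S S' f φ)
    (c' : S'.X n ⟶ Y) (γ' : zmap (S'.X (n + 1)) Y ⟶ S'.d n ≫ c') :
    S.Gamma n (f n ≫ c')
        (eqToHom (comp_zmap (f (n + 1)) Y).symm ≫
          (f (n + 1) ◁ γ') ≫
          eqToHom (Bicategory.Strict.assoc (f (n + 1)) (S'.d n) c').symm ≫
          ((letI := hinv (φ n); CategoryTheory.inv (φ n)) ▷ c') ≫
          eqToHom (Bicategory.Strict.assoc (S.d n) (f n) c')) =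
      eqToHom (comp_zmap (f (n + 1 + 1)) Y).symm ≫
        (f (n + 1 + 1) ◁ S'.Gamma n c' γ') ≫
        eqToHom (comp_zmap (f (n + 1 + 1)) Y) := by
  haveI := hinv (φ n)
  have hδ : S.δ n ▷ f n =
      eqToHom (Bicategory.Strict.assoc (S.d (n + 1)) (S.d n) (f n)) ≫
        (S.d (n + 1) ◁ φ n) ≫
        eqToHom (Bicategory.Strict.assoc (S.d (n + 1)) (f (n + 1)) (S'.d n)).symm ≫
        (φ (n + 1) ▷ S'.d n) ≫
        eqToHom (Bicategory.Strict.assoc (f (n + 1 + 1)) (S'.d (n + 1)) (S'.d n)) ≫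
        (f (n + 1 + 1) ◁ S'.δ n) ≫
        eqToHom (comp_zmap (f (n + 1 + 1)) (S'.X n)) ≫
        eqToHom (zmap_comp (S.X (n + 1 + 1)) (f n)).symm := by
    rw [← cancel_mono (eqToHom (zmap_comp (S.X (n + 1 + 1)) (f n)))]
    simp only [Category.assoc, eqToHom_trans, eqToHom_refl, Category.comp_id]
    exact (hmap n).symm
  unfold SecChainComplex.Gamma GammaGen
  rw [Bicategory.whiskerRight_comp, hδ]
  simp only [Bicategory.whiskerLeft_comp, Bicategory.comp_whiskerRight,
    Bicategory.whisker_assoc, Bicategory.comp_whiskerLeft,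
    Bicategory.whiskerRight_comp, Bicategory.Strict.associator_eqToIso, eqToIso.hom,
    eqToIso.inv, eqToHom_whiskerRight', whiskerLeft_eqToHom', Category.assoc,
    eqToHom_trans_assoc, eqToHom_refl, Category.id_comp]
  rw [← Bicategory.whiskerLeft_comp_assoc, ← Bicategory.comp_whiskerRight,
    IsIso.inv_hom_id]
  simp only [Bicategory.id_whiskerRight, Bicategory.whiskerLeft_id,
    Category.id_comp, eqToHom_trans_assoc]
  have h0 := Bicategory.whisker_exchange (φ (n + 1)) γ'
  simp only [Bicategory.comp_whiskerLeft, Bicategory.whiskerRight_comp,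
    whiskerRight_zmap, Bicategory.Strict.associator_eqToIso, eqToIso.hom,
    eqToIso.inv, Category.assoc, eqToHom_trans_assoc] at h0
  have p1 : S.d (n + 1) ≫ (f (n + 1) ≫ (S'.d n ≫ c')) =
      ((S.d (n + 1) ≫ f (n + 1)) ≫ S'.d n) ≫ c' := by
    simp only [Bicategory.Strict.assoc]
  have p2 : S.d (n + 1) ≫ (f (n + 1) ≫ zmap (S'.X (n + 1)) Y) =
      f (n + 1 + 1) ≫ (S'.d (n + 1) ≫ zmap (S'.X (n + 1)) Y) := by
    simp only [comp_zmap]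
  have p3 : f (n + 1 + 1) ≫ (S'.d (n + 1) ≫ (S'.d n ≫ c')) =
      ((f (n + 1 + 1) ≫ S'.d (n + 1)) ≫ S'.d n) ≫ c' := by
    simp only [Bicategory.Strict.assoc]
  have pa : (S.d (n + 1) ≫ f (n + 1)) ≫ zmap (S'.X (n + 1)) Y =
      S.d (n + 1) ≫ (f (n + 1) ≫ zmap (S'.X (n + 1)) Y) :=
    Bicategory.Strict.assoc _ _ _
  have pb : ((f (n + 1 + 1) ≫ S'.d (n + 1)) ≫ S'.d n) ≫ c' =
      (f (n + 1 + 1) ≫ S'.d (n + 1)) ≫ (S'.d n ≫ c') := by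
    simp only [Bicategory.Strict.assoc]
  have h1 : S.d (n + 1) ◁ (f (n + 1) ◁ γ') ≫ eqToHom p1 ≫
        ((φ (n + 1) ▷ S'.d n) ▷ c') =
      eqToHom p2 ≫ (f (n + 1 + 1) ◁ (S'.d (n + 1) ◁ γ')) ≫ eqToHom p3 := by
    rw [← cancel_epi (eqToHom pa), ← cancel_mono (eqToHom pb)]
    simp only [Category.assoc, eqToHom_trans, eqToHom_trans_assoc, eqToHom_refl,
      Category.comp_id, Category.id_comp]
    exact h0
  rw [reassoc_of% h1]
  simp only [Category.assoc, eqToHom_trans, eqToHom_trans_assoc, eqToHom_refl,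
    Category.comp_id, Category.id_comp]

end GammaMap
section Master

variable {B : Type u} [Bicategory.{w, v} B] [Bicategory.Strict B] [StrictZero B]
    [Preadditive (HoCat B)]

lemma hQm_d_cast (S : SecChainComplex B) {m k : ℤ} (hmk : m = k) :
    hQm (S.d m) = eqToHom (by rw [hmk]) ≫ hQm (S.d k) ≫ eqToHom (by rw [hmk]) := by
  subst hmk; simp

variable [Limits.HasFiniteBiproducts (HoCat B)]

lemma master_statement16 (sd : SigmaData B)
    (hinv : ∀ {X' Y' : B} {f g : X' ⟶ Y'} (η : f ⟶ g), IsIso η)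
    (hzero : ∀ X Y : B, hQm (zmap X Y) = (0 : hQ X ⟶ hQ Y))
    (S : SecChainComplex B) (Y : B) (n : ℤ) :
    (∀ (c : S.X n ⟶ Y), hQm (S.d n ≫ c) = 0 →
      ∀ (γ γ' : zmap (S.X (n + 1)) Y ⟶ S.d n ≫ c),
        GammaCohomologous S Y (n + 1) (S.Gamma n c γ) (S.Gamma n c γ')) ∧
    (∀ (c c' : S.X n ⟶ Y), hQm (S.d n ≫ c) = 0 → hQm (S.d n ≫ c') = 0 →
      ∀ (γ : zmap (S.X (n + 1)) Y ⟶ S.d n ≫ c)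
        (γ' : zmap (S.X (n + 1)) Y ⟶ S.d n ≫ c')
        (e : hQ (S.X (n - 1)) ⟶ hQ Y),
        hQm c' = hQm c +
          eqToHom (congrArg (fun m => hQ (S.X m)) (show n = n - 1 + 1 by ring)) ≫
            hQm (S.d (n - 1)) ≫ e →
        GammaCohomologous S Y (n + 1) (S.Gamma n c γ) (S.Gamma n c' γ')) ∧
    (∀ (c₁ c₂ c₁₂ : S.X n ⟶ Y),
      hQm (S.d n ≫ c₁) = 0 → hQm (S.d n ≫ c₂) = 0 → hQm (S.d n ≫ c₁₂) = 0 →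
      hQm c₁₂ = hQm c₁ + hQm c₂ →
      ∀ (γ₁ : zmap (S.X (n + 1)) Y ⟶ S.d n ≫ c₁)
        (γ₂ : zmap (S.X (n + 1)) Y ⟶ S.d n ≫ c₂)
        (γ₁₂ : zmap (S.X (n + 1)) Y ⟶ S.d n ≫ c₁₂),
        GammaCohomologous S Y (n + 1) (S.Gamma n c₁₂ γ₁₂)
          (S.Gamma n c₁ γ₁ ≫ S.Gamma n c₂ γ₂)) ∧
    (∀ (S' : SecChainComplex B)
        (f : ∀ k : ℤ, S.X k ⟶ S'.X k)
        (φ : ∀ k : ℤ, (S.d k ≫ f k) ⟶ (f (k + 1) ≫ S'.d k)),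
        IsSecChainMap S S' f φ →
        ∀ (c' : S'.X n ⟶ Y), hQm (S'.d n ≫ c') = 0 →
        ∀ (γ' : zmap (S'.X (n + 1)) Y ⟶ S'.d n ≫ c')
          (γ₁ : zmap (S.X (n + 1)) Y ⟶ S.d n ≫ (f n ≫ c')),
          GammaCohomologous S Y (n + 1)
            (S.Gamma n (f n ≫ c') γ₁)
            (eqToHom (comp_zmap (f (n + 1 + 1)) Y).symm ≫
              (f (n + 1 + 1) ◁ S'.Gamma n c' γ') ≫
              eqToHom (comp_zmap (f (n + 1 + 1)) Y))) := by
  refine ⟨?_, ?_, ?_, ?_⟩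
  · -- (1)
    intro c _ γ γ'
    obtain ⟨b, hb⟩ := sd.cls_gamma_indep hinv S n c γ γ'
    exact sd.cohomologous_of_cls S n b hb
  · -- (2)
    intro c c' hc hc' γ γ' e he
    obtain ⟨h, hh⟩ := hQm_surjective e
    have hkn : n - 1 + 1 = n := by ring
    obtain ⟨γ₀, hγ₀⟩ := gamma_coboundary' hinv S (n - 1) n hkn h
    have hs : hQm c' = hQm c +
        hQm (eqToHom (congrArg S.X hkn.symm) ≫ S.d (n - 1) ≫ h) := by
      rw [hQm_comp, hQm_comp, hQm_eqToHom, hh]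
      exact he
    have hdd : hQm (S.d (n - 1 + 1)) ≫ hQm (S.d (n - 1)) = 0 := by
      rw [← hQm_comp, hQm_eq_of_track (S.δ (n - 1)), hzero]
    have hb : hQm (S.d n ≫ (eqToHom (congrArg S.X hkn.symm) ≫ S.d (n - 1) ≫ h))
        = 0 := by
      rw [hQm_comp, hQm_comp, hQm_comp, hQm_eqToHom, hQm_d_cast S hkn.symm]
      simp only [Category.assoc, eqToHom_trans_assoc, eqToHom_trans, eqToHom_refl,
        Category.id_comp]
      rw [reassoc_of% hdd]
      simp
    obtain ⟨t, ht⟩ := cls_gamma_additive sd hinv S n hzero c _ c' hc hb hs γ γ₀ γ'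
    refine sd.cohomologous_of_cls S n t ?_
    rw [ht, hγ₀]
    have hone : (sd.σ (zmap (S.X (n + 1 + 1)) Y)).symm (𝟙 _) = 0 := by
      apply (sd.σ _).injective
      rw [Equiv.apply_symm_apply, sd.σ_zero hinv]
    rw [hone, add_zero]
  · -- (3)
    intro c₁ c₂ c₁₂ h1 h2 h12 hsum γ₁ γ₂ γ₁₂
    obtain ⟨t, ht⟩ := cls_gamma_additive sd hinv S n hzero c₁ c₂ c₁₂ h1 h2 hsum γ₁ γ₂ γ₁₂
    refine sd.cohomologous_of_cls S n (-t) ?_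
    rw [sd.σ_symm_comp, ht, sd.pre_neg]
    abel
  · -- (4)
    intro S' f φ hmap c' hc' γ' γ₁
    have hmain := gamma_chainmap hinv n f φ hmap c' γ'
    obtain ⟨b, hb⟩ := sd.cls_gamma_indep hinv S n (f n ≫ c') γ₁
      (eqToHom (comp_zmap (f (n + 1)) Y).symm ≫
        (f (n + 1) ◁ γ') ≫
        eqToHom (Bicategory.Strict.assoc (f (n + 1)) (S'.d n) c').symm ≫
        ((letI := hinv (φ n); CategoryTheory.inv (φ n)) ▷ c') ≫
        eqToHom (Bicategory.Strict.assoc (S.d n) (f n) c'))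
    refine sd.cohomologous_of_cls S n b ?_
    rw [← hmain]
    exact hb

end Master
theorem statement16 {B : Type u} [Bicategory.{w, v} B] [Bicategory.Strict B]
    [StrictZero B]
    (hinv : ∀ {X' Y' : B} {f g : X' ⟶ Y'} (η : f ⟶ g), IsIso η)
    [Preadditive (HoCat B)] [CategoryTheory.Limits.HasFiniteBiproducts (HoCat B)]
    (hzero : ∀ X Y : B, hQm (zmap X Y) = (0 : hQ X ⟶ hQ Y))
    (Pb : B → Prop)
    -- (a) `𝕃`-additive with `𝐚` closed under `𝕃`, or (b) `ℝ`-additive with `ℝ`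
    -- preserving `𝐚`-exactness and `𝐚` closed under `ℝ`:
    (hLR :
      (∃ l : LAdditiveStr B, ∀ Z : HoCat B, Pb Z.as → Pb ((l.L.obj Z).as)) ∨
      (∃ r : RAdditiveStr B,
        (∀ A : ChainComplexZ (HoCat B),
           A.aExact (fun Z => Pb Z.as) →
           (A.mapComplex r.R r.Rzero).aExact (fun Z => Pb Z.as)) ∧
        (∀ Z : HoCat B, Pb Z.as → Pb ((r.R.obj Z).as))))
    (X₀ : B) (S : SecChainComplex B) (hS : S.IsSecResolution Pb X₀)
    (Y : B) (n : ℤ) :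
    -- (1) independence of the choice of the track `γ`:
    (∀ (c : S.X n ⟶ Y), hQm (S.d n ≫ c) = 0 →
      ∀ (γ γ' : zmap (S.X (n + 1)) Y ⟶ S.d n ≫ c),
        GammaCohomologous S Y (n + 1) (S.Gamma n c γ) (S.Gamma n c γ')) ∧
    -- (2) independence of the representing cocycle `c` of the class
    -- `[c] ∈ Ext^n_𝐚(X,Y)`:
    (∀ (c c' : S.X n ⟶ Y), hQm (S.d n ≫ c) = 0 → hQm (S.d n ≫ c') = 0 →
      ∀ (γ : zmap (S.X (n + 1)) Y ⟶ S.d n ≫ c)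
        (γ' : zmap (S.X (n + 1)) Y ⟶ S.d n ≫ c')
        (e : hQ (S.X (n - 1)) ⟶ hQ Y),
        hQm c' = hQm c +
          eqToHom (congrArg (fun m => hQ (S.X m)) (show n = n - 1 + 1 by ring)) ≫
            hQm (S.d (n - 1)) ≫ e →
        GammaCohomologous S Y (n + 1) (S.Gamma n c γ) (S.Gamma n c' γ')) ∧
    -- (3) additivity: `d₍₂₎` is a homomorphism of groups:
    (∀ (c₁ c₂ c₁₂ : S.X n ⟶ Y),
      hQm (S.d n ≫ c₁) = 0 → hQm (S.d n ≫ c₂) = 0 → hQm (S.d n ≫ c₁₂) = 0 →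
      hQm c₁₂ = hQm c₁ + hQm c₂ →
      ∀ (γ₁ : zmap (S.X (n + 1)) Y ⟶ S.d n ≫ c₁)
        (γ₂ : zmap (S.X (n + 1)) Y ⟶ S.d n ≫ c₂)
        (γ₁₂ : zmap (S.X (n + 1)) Y ⟶ S.d n ≫ c₁₂),
        GammaCohomologous S Y (n + 1) (S.Gamma n c₁₂ γ₁₂)
          (S.Gamma n c₁ γ₁ ≫ S.Gamma n c₂ γ₂)) ∧
    -- (4) independence of the `𝐛`-resolution: for any other `𝐛`-resolution `S'` of
    -- `X₀` and any comparison secondary chain map `(f,φ) : S → S'` over `X₀`, the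
    -- differential commutes with the induced map `f^*`:
    (∀ (S' : SecChainComplex B), S'.IsSecResolution Pb X₀ →
      ∀ (f : ∀ k : ℤ, S.X k ⟶ S'.X k)
        (φ : ∀ k : ℤ, (S.d k ≫ f k) ⟶ (f (k + 1) ≫ S'.d k)),
        IsSecChainMap S S' f φ →
        ∀ (c' : S'.X n ⟶ Y), hQm (S'.d n ≫ c') = 0 →
        ∀ (γ' : zmap (S'.X (n + 1)) Y ⟶ S'.d n ≫ c')
          (γ₁ : zmap (S.X (n + 1)) Y ⟶ S.d n ≫ (f n ≫ c')),
          GammaCohomologous S Y (n + 1)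
            (S.Gamma n (f n ≫ c') γ₁)
            (eqToHom (comp_zmap (f (n + 1 + 1)) Y).symm ≫
              (f (n + 1 + 1) ◁ S'.Gamma n c' γ') ≫
              eqToHom (comp_zmap (f (n + 1 + 1)) Y))) := by
  rcases hLR with ⟨l, -⟩ | ⟨r, -, -⟩
  · obtain ⟨h1, h2, h3, h4⟩ := master_statement16 l.sigmaData hinv hzero S Y n
    exact ⟨h1, h2, h3, fun S' _ => h4 S'⟩
  · obtain ⟨h1, h2, h3, h4⟩ := master_statement16 r.sigmaData hinv hzero S Y n
    exact ⟨h1, h2, h3, fun S' _ => h4 S'⟩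
end
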